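/- Let p be prime, j,k ≥ 0, and let r, r', m, m', n₂ be integers with p ∤ r r' m m'. Then the complete character sum 𝔠_p = Σ_{β mod p^{j+k}} S(\bar{mr}, β·\bar r; p^j) · S(\bar{m'r'}, β·\bar{r'}; p^k) · e(β·\bar{rr'} n₂ / p^{j+k}) satisfies |𝔠_p| ≤ p^{j+k}·gcd(p^j, p^k, n₂)·C for some absolute constant C; moreover it vanishes unless gcd(p^j,p^k) | n₂. -/

import Mathlib

open scoped Classical

noncomputable def e2 (x : ℝ) : ℂ := Complex.exp (2 * Real.pi * Complex.I * x)

/-- The Kloosterman sum `S(a,b;c) = Σ*_{α mod c} e((aα + b ᾱ)/c)`. -/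
noncomputable def kloos (a b : ℤ) (c : ℕ) : ℂ :=
  ∑ α ∈ Finset.range c, if Nat.Coprime α c then
    e2 (((a * α + b * ((((α : ZMod c)⁻¹).val : ℕ) : ℤ) : ℤ) : ℝ) / (c : ℝ)) else 0

/-- The `p`-part character sum
`𝔠_p = Σ_{β mod p^{j+k}} S(\bar{mr}, β r̄; p^j) S(\bar{m'r'}, β r̄'; p^k) e(β \bar{rr'} n₂/p^{j+k})`. -/
noncomputable def charSumP (p j k : ℕ) (r r' m m' n₂ : ℤ) : ℂ :=
  ∑ β ∈ Finset.range (p ^ (j + k)),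
    kloos ((((m * r : ZMod (p ^ j))⁻¹).val : ℤ))
      ((β : ℤ) * (((r : ZMod (p ^ j))⁻¹).val : ℤ)) (p ^ j) *
    kloos ((((m' * r' : ZMod (p ^ k))⁻¹).val : ℤ))
      ((β : ℤ) * (((r' : ZMod (p ^ k))⁻¹).val : ℤ)) (p ^ k) *
    e2 ((((β : ℤ) * (((r * r' : ZMod (p ^ (j + k)))⁻¹).val : ℤ) * n₂ : ℤ) : ℝ) /
      ((p ^ (j + k) : ℕ) : ℝ))

/-! ### Auxiliary lemmas -/

lemma e2_add (x y : ℝ) : e2 (x + y) = e2 x * e2 y := by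
  simp only [e2, ← Complex.exp_add]
  push_cast
  ring_nf

lemma e2_abs (x : ℝ) : ‖e2 x‖ = 1 := by
  simp only [e2, Complex.norm_exp]
  have : (2 * Real.pi * Complex.I * x).re = 0 := by simp [Complex.mul_re, Complex.I_re]
  simp [this]

lemma e2_int (n : ℤ) : e2 n = 1 := by
  simp only [e2]
  rw [← Complex.exp_int_mul_two_pi_mul_I n]
  push_cast
  ring_nf

lemma e2_nat_mul (n : ℕ) (x : ℝ) : e2 (n * x) = e2 x ^ n := by
  simp only [e2, ← Complex.exp_nat_mul]
  push_cast
  ring_nf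

lemma e2_three (x1 x2 x3 : ℝ) : e2 x1 * e2 x2 * e2 x3 = e2 (x1 + x2 + x3) := by
  rw [e2_add, e2_add]

lemma sum_e2 (N : ℕ) (hN : 0 < N) (M : ℤ) :
    ∑ β ∈ Finset.range N, e2 (((β : ℤ) * M : ℤ) / (N : ℝ)) =
      if (N : ℤ) ∣ M then (N : ℂ) else 0 := by
  have hNR : (N : ℝ) ≠ 0 := Nat.cast_ne_zero.mpr hN.ne'
  have hterm : ∀ β : ℕ, e2 (((β : ℤ) * M : ℤ) / (N : ℝ)) = e2 ((M : ℝ) / N) ^ β := by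
    intro β
    rw [← e2_nat_mul]
    congr 1
    push_cast
    ring
  simp only [hterm]
  by_cases h : (N : ℤ) ∣ M
  · obtain ⟨c, rfl⟩ := h
    have h1 : e2 ((((N : ℤ) * c : ℤ) : ℝ) / N) = 1 := by
      have h2 : ((((N : ℤ) * c : ℤ) : ℝ) / N) = ((c : ℤ) : ℝ) := by
        push_cast; field_simp
      rw [h2, e2_int]
    rw [if_pos ⟨c, rfl⟩]
    push_cast at h1 ⊢
    simp [h1]
  · rw [if_neg h]
    have hne : e2 ((M : ℝ) / N) ≠ 1 := by
      intro heq
      apply h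
      rw [e2, Complex.exp_eq_one_iff] at heq
      obtain ⟨n, hn⟩ := heq
      have h2 : (2 * (Real.pi : ℂ) * Complex.I) ≠ 0 := by
        simp [Real.pi_ne_zero, Complex.I_ne_zero]
      have h3 : ((M : ℝ) / N : ℂ) = (n : ℂ) := by
        have h4 : (2 * (Real.pi : ℂ) * Complex.I) * ((M : ℝ) / N : ℂ) =
            (2 * (Real.pi : ℂ) * Complex.I) * (n : ℂ) := by
          push_cast at hn ⊢
          linear_combination hn
        exact mul_left_cancel₀ h2 h4
      have hMN : (M : ℝ) / N = (n : ℝ) := by exact_mod_cast h3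
      have h5 : (M : ℝ) = N * n := by field_simp at hMN; linarith [hMN]
      exact ⟨n, by exact_mod_cast h5⟩
    rw [geom_sum_eq hne]
    have hpow : e2 ((M : ℝ) / N) ^ N = 1 := by
      rw [← e2_nat_mul]
      have : (N : ℝ) * ((M : ℝ) / N) = ((M : ℤ) : ℝ) := by field_simp
      rw [this, e2_int]
    simp [hpow]

lemma key (J K : ℕ) (hJ : 0 < J) (hK : 0 < K) (a s a' s' t n₂ : ℤ) :
    ∑ β ∈ Finset.range (J * K),
      kloos a ((β : ℤ) * s) J * kloos a' ((β : ℤ) * s') K *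
        e2 ((((β : ℤ) * t * n₂ : ℤ) : ℝ) / ((J * K : ℕ) : ℝ)) =
    ∑ α ∈ Finset.range J, ∑ γ ∈ Finset.range K,
      if Nat.Coprime α J ∧ Nat.Coprime γ K then
        (e2 (((a * α : ℤ) : ℝ) / J) * e2 (((a' * γ : ℤ) : ℝ) / K)) *
          (if ((J * K : ℕ) : ℤ) ∣
              ((K : ℤ) * s * ((((α : ZMod J)⁻¹).val : ℕ) : ℤ) +
               (J : ℤ) * s' * ((((γ : ZMod K)⁻¹).val : ℕ) : ℤ) + t * n₂)
            then ((J * K : ℕ) : ℂ) else 0)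
      else 0 := by
  have hJR : (J : ℝ) ≠ 0 := Nat.cast_ne_zero.mpr hJ.ne'
  have hKR : (K : ℝ) ≠ 0 := Nat.cast_ne_zero.mpr hK.ne'
  have step1 : ∀ β : ℕ,
      kloos a ((β : ℤ) * s) J * kloos a' ((β : ℤ) * s') K *
        e2 ((((β : ℤ) * t * n₂ : ℤ) : ℝ) / ((J * K : ℕ) : ℝ)) =
      ∑ α ∈ Finset.range J, ∑ γ ∈ Finset.range K,
        (if Nat.Coprime α J then
            e2 (((a * α + ((β : ℤ) * s) * ((((α : ZMod J)⁻¹).val : ℕ) : ℤ) : ℤ) : ℝ) / J)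
          else 0) *
        (if Nat.Coprime γ K then
            e2 (((a' * γ + ((β : ℤ) * s') * ((((γ : ZMod K)⁻¹).val : ℕ) : ℤ) : ℤ) : ℝ) / K)
          else 0) *
        e2 ((((β : ℤ) * t * n₂ : ℤ) : ℝ) / ((J * K : ℕ) : ℝ)) := by
    intro β
    rw [kloos, kloos, Finset.sum_mul_sum, Finset.sum_mul]
    refine Finset.sum_congr rfl fun α _ => ?_
    rw [Finset.sum_mul]
  simp only [step1]
  rw [Finset.sum_comm]
  refine Finset.sum_congr rfl fun α _ => ?_
  rw [Finset.sum_comm]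
  refine Finset.sum_congr rfl fun γ _ => ?_
  by_cases hα : Nat.Coprime α J
  · by_cases hγ : Nat.Coprime γ K
    · simp only [if_pos hα, if_pos hγ,
        if_pos (show Nat.Coprime α J ∧ Nat.Coprime γ K from ⟨hα, hγ⟩)]
      set A : ℤ := ((((α : ZMod J)⁻¹).val : ℕ) : ℤ) with hA
      set G : ℤ := ((((γ : ZMod K)⁻¹).val : ℕ) : ℤ) with hG
      set M : ℤ := (K : ℤ) * s * A + (J : ℤ) * s' * G + t * n₂ with hM
      have hterm : ∀ β : ℕ,
          e2 (((a * α + ((β : ℤ) * s) * A : ℤ) : ℝ) / J) *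
            e2 (((a' * γ + ((β : ℤ) * s') * G : ℤ) : ℝ) / K) *
            e2 ((((β : ℤ) * t * n₂ : ℤ) : ℝ) / ((J * K : ℕ) : ℝ)) =
          (e2 (((a * α : ℤ) : ℝ) / J) * e2 (((a' * γ : ℤ) : ℝ) / K)) *
            e2 ((((β : ℤ) * M : ℤ) : ℝ) / ((J * K : ℕ) : ℝ)) := by
        intro β
        rw [e2_three, e2_three]
        congr 1
        rw [hM, hA, hG]
        push_cast
        field_simp
        ring
      simp only [hterm]
      rw [← Finset.mul_sum, sum_e2 (J * K) (Nat.mul_pos hJ hK) M]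
    · simp only [hγ, if_false, and_false, mul_zero, zero_mul, Finset.sum_const_zero]
  · simp only [hα, if_false, false_and, mul_zero, zero_mul, Finset.sum_const_zero]

lemma isUnit_zmod_pow {p : ℕ} (hp : p.Prime) {r : ℤ} (hr : ¬((p : ℤ) ∣ r)) (n : ℕ) :
    IsUnit ((r : ZMod (p ^ n))) := by
  have h1 : IsCoprime ((p : ℤ)) r := (Nat.prime_iff_prime_int.1 hp).coprime_iff_not_dvd.mpr hr
  obtain ⟨u, v, huv⟩ := h1.symm.pow_right (n := n)
  apply IsUnit.of_mul_eq_one ((u : ZMod (p ^ n)))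
  have h2 := congrArg (fun z : ℤ => ((z : ZMod (p ^ n)))) huv
  push_cast at h2
  rw [show ((p : ZMod (p ^ n)) ^ n) = 0 by rw [← Nat.cast_pow, ZMod.natCast_self],
    mul_zero, add_zero, mul_comm] at h2
  exact h2

lemma inv_val_mul {n : ℕ} [NeZero n] {x : ZMod n} (hx : IsUnit x) :
    (((x⁻¹.val : ℕ) : ℤ) : ZMod n) * x = 1 := by
  rw [Int.cast_natCast, ZMod.natCast_val, ZMod.cast_id]
  exact ZMod.inv_mul_of_unit x hx

lemma gcd_pow_min (p j k : ℕ) : Nat.gcd (p ^ j) (p ^ k) = p ^ (min j k) := by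
  rcases le_total j k with h | h
  · rw [Nat.gcd_eq_left (pow_dvd_pow p h), min_eq_left h]
  · rw [Nat.gcd_eq_right (pow_dvd_pow p h), min_eq_right h]

/-- If `s` is an inverse of `w` mod `n` and `n ∣ s⋅(γ̄₁ - γ̄₂)` then `γ₁ = γ₂`. -/
lemma inv_val_inj {n : ℕ} [NeZero n] {s w : ℤ}
    (hs : (s : ZMod n) * (w : ZMod n) = 1) {γ₁ γ₂ : ℕ}
    (h1 : γ₁ < n) (h2 : γ₂ < n) (hc1 : Nat.Coprime γ₁ n) (hc2 : Nat.Coprime γ₂ n)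
    (hd : (n : ℤ) ∣ s * (((((γ₁ : ZMod n)⁻¹).val : ℕ) : ℤ) -
      ((((γ₂ : ZMod n)⁻¹).val : ℕ) : ℤ))) : γ₁ = γ₂ := by
  have hz : ((s * (((((γ₁ : ZMod n)⁻¹).val : ℕ) : ℤ) -
      ((((γ₂ : ZMod n)⁻¹).val : ℕ) : ℤ)) : ℤ) : ZMod n) = 0 :=
    (ZMod.intCast_zmod_eq_zero_iff_dvd _ n).mpr hd
  push_cast at hz
  have hval : (((γ₁ : ZMod n)⁻¹).val : ZMod n) = (((γ₂ : ZMod n)⁻¹).val : ZMod n) := by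
    have h3 : (w : ZMod n) * ((s : ZMod n) *
        (((((γ₁ : ZMod n)⁻¹).val : ZMod n)) - (((γ₂ : ZMod n)⁻¹).val : ZMod n))) = 0 := by
      rw [hz, mul_zero]
    rw [← mul_assoc, mul_comm (w : ZMod n) (s : ZMod n), hs, one_mul, sub_eq_zero] at h3
    exact h3
  rw [ZMod.natCast_val, ZMod.natCast_val, ZMod.cast_id, ZMod.cast_id] at hval
  have hu1 : IsUnit ((γ₁ : ZMod n)) := (ZMod.isUnit_iff_coprime γ₁ n).mpr hc1
  have hu2 : IsUnit ((γ₂ : ZMod n)) := (ZMod.isUnit_iff_coprime γ₂ n).mpr hc2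
  have heq : (γ₁ : ZMod n) = (γ₂ : ZMod n) := by
    calc (γ₁ : ZMod n) = (γ₁ : ZMod n) * ((γ₂ : ZMod n)⁻¹ * (γ₂ : ZMod n)) := by
          rw [ZMod.inv_mul_of_unit _ hu2, mul_one]
      _ = ((γ₁ : ZMod n) * (γ₁ : ZMod n)⁻¹) * (γ₂ : ZMod n) := by rw [← hval]; ring
      _ = (γ₂ : ZMod n) := by rw [ZMod.mul_inv_of_unit _ hu1, one_mul]
  have := congrArg ZMod.val heq
  rwa [ZMod.val_cast_of_lt h1, ZMod.val_cast_of_lt h2] at this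

/-- If the main congruence has a solution then `p^(min j k) ∣ n₂`. -/
lemma dvd_n2 {p j k : ℕ} {t n₂ x y rr : ℤ}
    (ht : (t : ZMod (p ^ j * p ^ k)) * (rr : ZMod (p ^ j * p ^ k)) = 1)
    (hd : ((p ^ j * p ^ k : ℕ) : ℤ) ∣
      ((p ^ k : ℕ) : ℤ) * x + ((p ^ j : ℕ) : ℤ) * y + t * n₂) :
    ((p ^ (min j k) : ℕ) : ℤ) ∣ n₂ := by
  have hdn : (p ^ (min j k) : ℕ) ∣ p ^ j * p ^ k :=
    dvd_mul_of_dvd_left (pow_dvd_pow p (min_le_left j k)) _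
  have h2 : ((p ^ (min j k) : ℕ) : ℤ) ∣ t * n₂ := by
    have e1 : ((p ^ (min j k) : ℕ) : ℤ) ∣ ((p ^ k : ℕ) : ℤ) * x :=
      dvd_mul_of_dvd_left (Int.natCast_dvd_natCast.mpr (pow_dvd_pow p (min_le_right j k))) x
    have e2 : ((p ^ (min j k) : ℕ) : ℤ) ∣ ((p ^ j : ℕ) : ℤ) * y :=
      dvd_mul_of_dvd_left (Int.natCast_dvd_natCast.mpr (pow_dvd_pow p (min_le_left j k))) y
    have h3 : ((p ^ (min j k) : ℕ) : ℤ) ∣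
        ((p ^ k : ℕ) : ℤ) * x + ((p ^ j : ℕ) : ℤ) * y + t * n₂ :=
      dvd_trans (Int.natCast_dvd_natCast.mpr hdn) hd
    have h4 : t * n₂ = (((p ^ k : ℕ) : ℤ) * x + ((p ^ j : ℕ) : ℤ) * y + t * n₂) -
        ((p ^ k : ℕ) : ℤ) * x - ((p ^ j : ℕ) : ℤ) * y := by ring
    rw [h4]
    exact dvd_sub (dvd_sub h3 e1) e2
  have hz : ((t * n₂ : ℤ) : ZMod (p ^ (min j k))) = 0 :=
    (ZMod.intCast_zmod_eq_zero_iff_dvd _ _).mpr h2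
  have htm : (t : ZMod (p ^ (min j k))) * (rr : ZMod (p ^ (min j k))) = 1 := by
    have h5 : (ZMod.castHom hdn (ZMod (p ^ (min j k))))
        ((t : ZMod (p ^ j * p ^ k)) * (rr : ZMod (p ^ j * p ^ k))) = 1 := by
      rw [ht, map_one]
    rwa [map_mul, map_intCast, map_intCast] at h5
  have hn2 : ((n₂ : ℤ) : ZMod (p ^ (min j k))) = 0 := by
    have : ((n₂ : ℤ) : ZMod (p ^ (min j k))) =
        (rr : ZMod (p ^ (min j k))) * ((t * n₂ : ℤ) : ZMod (p ^ (min j k))) := by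
      push_cast
      rw [← mul_assoc, mul_comm (rr : ZMod (p ^ (min j k))) (t : ZMod (p ^ (min j k))), htm,
        one_mul]
    rw [this, hz, mul_zero]
  exact (ZMod.intCast_zmod_eq_zero_iff_dvd _ _).mp hn2

/-- The congruence expression `M(α,γ)`. -/
noncomputable def MM (p j k : ℕ) (r r' n₂ : ℤ) (q : ℕ × ℕ) : ℤ :=
  ((p ^ k : ℕ) : ℤ) * ((((r : ZMod (p ^ j))⁻¹).val : ℕ) : ℤ) *
      ((((q.1 : ZMod (p ^ j))⁻¹).val : ℕ) : ℤ) +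
    ((p ^ j : ℕ) : ℤ) * ((((r' : ZMod (p ^ k))⁻¹).val : ℕ) : ℤ) *
      ((((q.2 : ZMod (p ^ k))⁻¹).val : ℕ) : ℤ) +
    ((((r * r' : ZMod (p ^ j * p ^ k))⁻¹).val : ℕ) : ℤ) * n₂

/-- The solution set. -/
noncomputable def SS (p j k : ℕ) (r r' n₂ : ℤ) : Finset (ℕ × ℕ) :=
  (Finset.range (p ^ j) ×ˢ Finset.range (p ^ k)).filter
    (fun q => (Nat.Coprime q.1 (p ^ j) ∧ Nat.Coprime q.2 (p ^ k)) ∧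
      ((p ^ j * p ^ k : ℕ) : ℤ) ∣ MM p j k r r' n₂ q)

noncomputable def FF (p j k : ℕ) (r r' m m' : ℤ) (q : ℕ × ℕ) : ℂ :=
  e2 ((((((m * r : ZMod (p ^ j))⁻¹).val : ℕ) : ℤ) * q.1 : ℤ) / ((p ^ j : ℕ) : ℝ)) *
    e2 ((((((m' * r' : ZMod (p ^ k))⁻¹).val : ℕ) : ℤ) * q.2 : ℤ) / ((p ^ k : ℕ) : ℝ))

/-- `|𝔠_p| ≤ C · p^{j+k} · gcd(p^j, p^k, n₂)` for an absolute constant `C`, and `𝔠_p`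
vanishes unless `gcd(p^j, p^k) ∣ n₂`. -/
theorem stmt_3 :
    ∃ C : ℝ, 0 < C ∧
      ∀ (p : ℕ), p.Prime → ∀ (j k : ℕ) (r r' m m' n₂ : ℤ),
        ¬ ((p : ℤ) ∣ r * r' * m * m') →
        ‖charSumP p j k r r' m m' n₂‖ ≤
          C * ((p : ℝ) ^ (j + k)) * ((Nat.gcd (Nat.gcd (p ^ j) (p ^ k)) n₂.natAbs : ℕ) : ℝ) ∧
        (¬ (((Nat.gcd (p ^ j) (p ^ k) : ℕ) : ℤ) ∣ n₂) → charSumP p j k r r' m m' n₂ = 0) := by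
  refine ⟨1, one_pos, fun p hp j k r r' m m' n₂ hcop => ?_⟩
  haveI : NeZero (p ^ j) := ⟨pow_ne_zero j hp.pos.ne'⟩
  haveI : NeZero (p ^ k) := ⟨pow_ne_zero k hp.pos.ne'⟩
  haveI : NeZero (p ^ j * p ^ k) :=
    ⟨mul_ne_zero (pow_ne_zero j hp.pos.ne') (pow_ne_zero k hp.pos.ne')⟩
  have hr : ¬ ((p : ℤ) ∣ r) := fun h => hcop (h.trans ⟨r' * m * m', by ring⟩)
  have hr' : ¬ ((p : ℤ) ∣ r') := fun h => hcop (h.trans ⟨r * m * m', by ring⟩)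
  have hrr' : ¬ ((p : ℤ) ∣ r * r') := fun h => hcop (h.trans ⟨m * m', by ring⟩)
  have hur : IsUnit ((r : ZMod (p ^ j))) := isUnit_zmod_pow hp hr j
  have hur' : IsUnit ((r' : ZMod (p ^ k))) := isUnit_zmod_pow hp hr' k
  have hurr' : IsUnit ((r * r' : ZMod (p ^ j * p ^ k))) := by
    rw [← pow_add]
    have := isUnit_zmod_pow hp hrr' (j + k)
    rwa [Int.cast_mul] at this
  have hs : (((((r : ZMod (p ^ j))⁻¹).val : ℕ) : ℤ) : ZMod (p ^ j)) * ((r : ℤ) : ZMod (p ^ j)) = 1 :=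
    inv_val_mul hur
  have hs' : (((((r' : ZMod (p ^ k))⁻¹).val : ℕ) : ℤ) : ZMod (p ^ k)) *
      ((r' : ℤ) : ZMod (p ^ k)) = 1 := inv_val_mul hur'
  have ht : (((((r * r' : ZMod (p ^ j * p ^ k))⁻¹).val : ℕ) : ℤ) : ZMod (p ^ j * p ^ k)) *
      ((r * r' : ℤ) : ZMod (p ^ j * p ^ k)) = 1 := by
    rw [Int.cast_mul]
    exact inv_val_mul hurr'
  -- structural identity
  have hEq : charSumP p j k r r' m m' n₂ =
      ∑ q ∈ SS p j k r r' n₂, FF p j k r r' m m' q * ((p ^ j * p ^ k : ℕ) : ℂ) := by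
    unfold charSumP
    rw [pow_add]
    rw [key (p ^ j) (p ^ k) (pow_pos hp.pos j) (pow_pos hp.pos k) _ _ _ _ _ n₂]
    rw [← Finset.sum_product']
    unfold SS
    rw [Finset.sum_filter]
    refine Finset.sum_congr rfl fun q _ => ?_
    unfold FF MM
    by_cases h1 : Nat.Coprime q.1 (p ^ j) ∧ Nat.Coprime q.2 (p ^ k)
    · rw [if_pos h1]
      by_cases h2 : ((p ^ j * p ^ k : ℕ) : ℤ) ∣
          (((p ^ k : ℕ) : ℤ) * ((((r : ZMod (p ^ j))⁻¹).val : ℕ) : ℤ) *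
              ((((q.1 : ZMod (p ^ j))⁻¹).val : ℕ) : ℤ) +
            ((p ^ j : ℕ) : ℤ) * ((((r' : ZMod (p ^ k))⁻¹).val : ℕ) : ℤ) *
              ((((q.2 : ZMod (p ^ k))⁻¹).val : ℕ) : ℤ) +
            ((((r * r' : ZMod (p ^ j * p ^ k))⁻¹).val : ℕ) : ℤ) * n₂)
      · rw [if_pos h2, if_pos ⟨h1, h2⟩]
      · rw [if_neg h2, if_neg (fun hc => h2 hc.2), mul_zero]
    · rw [if_neg h1, if_neg (fun hc => h1 hc.1)]
  -- pointwise absolute value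
  have habs : ‖charSumP p j k r r' m m' n₂‖ ≤
      ((SS p j k r r' n₂).card : ℝ) * ((p ^ j * p ^ k : ℕ) : ℝ) := by
    rw [hEq]
    refine le_trans (norm_sum_le _ _) ?_
    have hpt : ∀ q ∈ SS p j k r r' n₂,
        ‖FF p j k r r' m m' q * ((p ^ j * p ^ k : ℕ) : ℂ)‖ =
          ((p ^ j * p ^ k : ℕ) : ℝ) := by
      intro q _
      unfold FF
      rw [norm_mul, norm_mul, e2_abs, e2_abs, Complex.norm_natCast, one_mul, one_mul]
    rw [Finset.sum_congr rfl hpt, Finset.sum_const, nsmul_eq_mul]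
  -- injectivity: first coordinate
  have hcard1 : (SS p j k r r' n₂).card ≤ p ^ j := by
    have := Finset.card_le_card_of_injOn (f := Prod.fst)
      (s := SS p j k r r' n₂) (t := Finset.range (p ^ j)) ?_ ?_
    · simpa using this
    · intro q hq
      rw [SS, Finset.mem_coe, Finset.mem_filter, Finset.mem_product, Finset.mem_range, Finset.mem_range] at hq
      exact Finset.mem_range.mpr hq.1.1
    · intro q1 hq1 q2 hq2 hfst
      simp only [Finset.coe_filter, Set.mem_setOf_eq, SS, Finset.mem_coe, Finset.mem_filter,
        Finset.mem_product, Finset.mem_range] at hq1 hq2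
      obtain ⟨⟨_, hlt1⟩, ⟨_, hc1⟩, hd1⟩ := hq1
      obtain ⟨⟨_, hlt2⟩, ⟨_, hc2⟩, hd2⟩ := hq2
      refine Prod.ext hfst ?_
      have hD : ((p ^ j * p ^ k : ℕ) : ℤ) ∣ MM p j k r r' n₂ q1 - MM p j k r r' n₂ q2 :=
        dvd_sub hd1 hd2
      have hrw : MM p j k r r' n₂ q1 - MM p j k r r' n₂ q2 =
          ((p ^ j : ℕ) : ℤ) * (((((r' : ZMod (p ^ k))⁻¹).val : ℕ) : ℤ) *
            (((((q1.2 : ZMod (p ^ k))⁻¹).val : ℕ) : ℤ) -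
              ((((q2.2 : ZMod (p ^ k))⁻¹).val : ℕ) : ℤ))) := by
        unfold MM
        rw [hfst]
        ring
      rw [hrw, Nat.cast_mul] at hD
      have hD2 := (mul_dvd_mul_iff_left
        (show ((p ^ j : ℕ) : ℤ) ≠ 0 from
          Int.natCast_ne_zero.mpr (pow_ne_zero j hp.pos.ne'))).mp hD
      exact inv_val_inj hs' hlt1 hlt2 hc1 hc2 hD2
  -- injectivity: second coordinate
  have hcard2 : (SS p j k r r' n₂).card ≤ p ^ k := by
    have := Finset.card_le_card_of_injOn (f := Prod.snd)
      (s := SS p j k r r' n₂) (t := Finset.range (p ^ k)) ?_ ?_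
    · simpa using this
    · intro q hq
      rw [SS, Finset.mem_coe, Finset.mem_filter, Finset.mem_product, Finset.mem_range, Finset.mem_range] at hq
      exact Finset.mem_range.mpr hq.1.2
    · intro q1 hq1 q2 hq2 hsnd
      simp only [Finset.coe_filter, Set.mem_setOf_eq, SS, Finset.mem_coe, Finset.mem_filter,
        Finset.mem_product, Finset.mem_range] at hq1 hq2
      obtain ⟨⟨hlt1, _⟩, ⟨hc1, _⟩, hd1⟩ := hq1
      obtain ⟨⟨hlt2, _⟩, ⟨hc2, _⟩, hd2⟩ := hq2
      refine Prod.ext ?_ hsnd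
      have hD : ((p ^ j * p ^ k : ℕ) : ℤ) ∣ MM p j k r r' n₂ q1 - MM p j k r r' n₂ q2 :=
        dvd_sub hd1 hd2
      have hrw : MM p j k r r' n₂ q1 - MM p j k r r' n₂ q2 =
          ((p ^ k : ℕ) : ℤ) * (((((r : ZMod (p ^ j))⁻¹).val : ℕ) : ℤ) *
            (((((q1.1 : ZMod (p ^ j))⁻¹).val : ℕ) : ℤ) -
              ((((q2.1 : ZMod (p ^ j))⁻¹).val : ℕ) : ℤ))) := by
        unfold MM
        rw [hsnd]
        ring
      rw [hrw, Nat.cast_mul, mul_comm (((p ^ j : ℕ)) : ℤ) (((p ^ k : ℕ)) : ℤ)] at hD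
      have hD2 := (mul_dvd_mul_iff_left
        (show ((p ^ k : ℕ) : ℤ) ≠ 0 from
          Int.natCast_ne_zero.mpr (pow_ne_zero k hp.pos.ne'))).mp hD
      exact inv_val_inj hs hlt1 hlt2 hc1 hc2 hD2
  have hcard : (SS p j k r r' n₂).card ≤ p ^ (min j k) := by
    rcases le_total j k with h | h
    · rwa [min_eq_left h]
    · rwa [min_eq_right h]
  -- vanishing
  have hvanish : ¬ (((Nat.gcd (p ^ j) (p ^ k) : ℕ) : ℤ) ∣ n₂) → SS p j k r r' n₂ = ∅ := by
    intro hn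
    rw [Finset.eq_empty_iff_forall_notMem]
    intro q hq
    rw [SS, Finset.mem_filter] at hq
    obtain ⟨_, _, hd⟩ := hq
    apply hn
    rw [gcd_pow_min]
    refine dvd_n2 (p := p) (j := j) (k := k)
      (x := ((((r : ZMod (p ^ j))⁻¹).val : ℕ) : ℤ) * ((((q.1 : ZMod (p ^ j))⁻¹).val : ℕ) : ℤ))
      (y := ((((r' : ZMod (p ^ k))⁻¹).val : ℕ) : ℤ) * ((((q.2 : ZMod (p ^ k))⁻¹).val : ℕ) : ℤ))
      ht ?_
    have : ((p ^ k : ℕ) : ℤ) * (((((r : ZMod (p ^ j))⁻¹).val : ℕ) : ℤ) *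
          ((((q.1 : ZMod (p ^ j))⁻¹).val : ℕ) : ℤ)) +
        ((p ^ j : ℕ) : ℤ) * (((((r' : ZMod (p ^ k))⁻¹).val : ℕ) : ℤ) *
          ((((q.2 : ZMod (p ^ k))⁻¹).val : ℕ) : ℤ)) +
        ((((r * r' : ZMod (p ^ j * p ^ k))⁻¹).val : ℕ) : ℤ) * n₂ = MM p j k r r' n₂ q := by
      unfold MM; ring
    rw [this]
    exact hd
  constructor
  · by_cases hg : ((Nat.gcd (p ^ j) (p ^ k) : ℕ) : ℤ) ∣ n₂
    · have hg2 : p ^ (min j k) ∣ n₂.natAbs := by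
        rw [gcd_pow_min] at hg
        have := Int.natAbs_dvd_natAbs.mpr hg
        rwa [Int.natAbs_natCast] at this
      have hG : Nat.gcd (Nat.gcd (p ^ j) (p ^ k)) n₂.natAbs = p ^ (min j k) := by
        rw [gcd_pow_min]; exact Nat.gcd_eq_left hg2
      rw [hG]
      refine le_trans habs ?_
      have hle : ((SS p j k r r' n₂).card : ℝ) ≤ ((p ^ (min j k) : ℕ) : ℝ) :=
        Nat.cast_le.mpr hcard
      calc ((SS p j k r r' n₂).card : ℝ) * ((p ^ j * p ^ k : ℕ) : ℝ)
          ≤ ((p ^ (min j k) : ℕ) : ℝ) * ((p ^ j * p ^ k : ℕ) : ℝ) :=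
            mul_le_mul_of_nonneg_right hle (by positivity)
        _ = 1 * ((p : ℝ) ^ (j + k)) * ((p ^ (min j k) : ℕ) : ℝ) := by
            push_cast; ring
    · have hS := hvanish hg
      rw [hEq, hS, Finset.sum_empty]
      simp only [norm_zero]
      positivity
  · intro hn
    rw [hEq, hvanish hn, Finset.sum_empty]
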